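/- Let $(\mathcal{X},\Sigma,\mu)$ be a labelled Markov process. Then there exists a largest bisimulation on $(\mathcal{X},\Sigma,\mu)$, and it is an equivalence relation. -/

import Mathlib

open scoped ENNReal
open MeasureTheory

/-- Relational image `R(X)`. -/
def rimg {S : Type*} (R : S → S → Prop) (X : Set S) : Set S := {y | ∃ x ∈ X, R x y}

/-- A labelled Markov process structure: every `μ x a` is a sub-probability measure
and `x ↦ μ x a A` is measurable for measurable `A`. -/
def IsLMP {X A : Type*} [MeasurableSpace X] (μ : X → A → Measure X) : Prop :=
  (∀ x a, μ x a Set.univ ≤ 1) ∧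
  (∀ (a : A) (B : Set X), MeasurableSet B → Measurable fun x => μ x a B)

/-- A bisimulation on a labelled Markov process: a reflexive relation `R` such that
(1) related states are monotone on measurable `R`-closed sets and
(2) related states have equal total mass. -/
def IsLMPBisim {X A : Type*} [MeasurableSpace X] (μ : X → A → Measure X)
    (R : X → X → Prop) : Prop :=
  Reflexive R ∧
  (∀ x y, R x y → ∀ (a : A) (B : Set X), MeasurableSet B → B = rimg R B →
    μ x a B ≤ μ y a B) ∧
  (∀ x y, R x y → ∀ a : A, μ x a Set.univ = μ y a Set.univ)

/-- If `R'` is reflexive and contained in `R`, then any `R`-closed set is `R'`-closed. -/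
lemma rimg_transfer {S : Type*} {R R' : S → S → Prop} (hrefl : Reflexive R')
    (hsub : ∀ x y, R' x y → R x y) {B : Set S} (hB : B = rimg R B) : B = rimg R' B := by
  apply subset_antisymm
  · intro b hb; exact ⟨b, hb, hrefl b⟩
  · rintro z ⟨b, hb, hbz⟩
    rw [hB]; exact ⟨b, hb, hsub b z hbz⟩

/-- Equality is a bisimulation. -/
lemma eq_isLMPBisim {X A : Type*} [MeasurableSpace X] (μ : X → A → Measure X) :
    IsLMPBisim μ (· = ·) := by
  refine ⟨fun x => rfl, ?_, ?_⟩
  · rintro x y rfl a B _ _; exact le_rfl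
  · rintro x y rfl a; rfl

/-- The inverse of a bisimulation is a bisimulation. -/
lemma inv_isLMPBisim {X A : Type*} [MeasurableSpace X] {μ : X → A → Measure X}
    (hμ : IsLMP μ) {R : X → X → Prop} (h : IsLMPBisim μ R) :
    IsLMPBisim μ (fun x y => R y x) := by
  obtain ⟨hrefl, h1, h2⟩ := h
  refine ⟨fun x => hrefl x, ?_, fun x y hxy a => (h2 y x hxy a).symm⟩
  intro x y hxy a B hB hBc
  -- the complement of B is closed under R
  have hcompl : Bᶜ = rimg R Bᶜ := by
    apply subset_antisymm
    · intro b hb; exact ⟨b, hb, hrefl b⟩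
    · rintro z ⟨b, hb, hbz⟩ hz
      exact hb (by rw [hBc]; exact ⟨z, hz, hbz⟩)
  have hle : μ y a Bᶜ ≤ μ x a Bᶜ := h1 y x hxy a Bᶜ hB.compl hcompl
  have htot : μ y a Set.univ = μ x a Set.univ := h2 y x hxy a
  have hx : μ x a B + μ x a Bᶜ = μ x a Set.univ := measure_add_measure_compl hB
  have hy : μ y a B + μ y a Bᶜ = μ y a Set.univ := measure_add_measure_compl hB
  have hfin : μ x a Bᶜ ≠ ⊤ :=
    (lt_of_le_of_lt (le_trans (measure_mono (Set.subset_univ _)) (hμ.1 x a))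
      ENNReal.one_lt_top).ne
  have key : μ x a B + μ x a Bᶜ ≤ μ y a B + μ x a Bᶜ := by
    calc μ x a B + μ x a Bᶜ = μ y a B + μ y a Bᶜ := by rw [hx, hy, htot]
    _ ≤ μ y a B + μ x a Bᶜ := add_le_add le_rfl hle
  exact (ENNReal.add_le_add_iff_right hfin).mp key

/-- The composition of two bisimulations is a bisimulation. -/
lemma comp_isLMPBisim {X A : Type*} [MeasurableSpace X] {μ : X → A → Measure X}
    {R R' : X → X → Prop} (h : IsLMPBisim μ R) (h' : IsLMPBisim μ R') :
    IsLMPBisim μ (fun x z => ∃ y, R x y ∧ R' y z) := by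
  obtain ⟨hrefl, h1, h2⟩ := h
  obtain ⟨hrefl', h1', h2'⟩ := h'
  refine ⟨fun x => ⟨x, hrefl x, hrefl' x⟩, ?_, ?_⟩
  · rintro x z ⟨y, hxy, hyz⟩ a B hB hBc
    have hBR : B = rimg R B := by
      apply subset_antisymm
      · intro b hb; exact ⟨b, hb, hrefl b⟩
      · rintro w ⟨b, hb, hbw⟩
        rw [hBc]; exact ⟨b, hb, w, hbw, hrefl' w⟩
    have hBR' : B = rimg R' B := by
      apply subset_antisymm
      · intro b hb; exact ⟨b, hb, hrefl' b⟩
      · rintro w ⟨b, hb, hbw⟩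
        rw [hBc]; exact ⟨b, hb, b, hrefl b, hbw⟩
    exact le_trans (h1 x y hxy a B hB hBR) (h1' y z hyz a B hB hBR')
  · rintro x z ⟨y, hxy, hyz⟩ a
    exact (h2 x y hxy a).trans (h2' y z hyz a)

/-- every labelled Markov process has a largest bisimulation,
and it is an equivalence relation. -/
theorem stmt7 {X A : Type*} [MeasurableSpace X] (μ : X → A → Measure X)
    (hμ : IsLMP μ) :
    ∃ R : X → X → Prop, IsLMPBisim μ R ∧ Equivalence R ∧
      ∀ R' : X → X → Prop, IsLMPBisim μ R' → ∀ x y, R' x y → R x y := by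
  refine ⟨fun x y => ∃ R' : X → X → Prop, IsLMPBisim μ R' ∧ R' x y, ?_, ?_, ?_⟩
  · refine ⟨fun x => ⟨(· = ·), eq_isLMPBisim μ, rfl⟩, ?_, ?_⟩
    · rintro x y ⟨R', hR', hxy⟩ a B hB hBc
      have hBc' : B = rimg R' B :=
        rimg_transfer hR'.1 (fun u v h => ⟨R', hR', h⟩) hBc
      exact hR'.2.1 x y hxy a B hB hBc'
    · rintro x y ⟨R', hR', hxy⟩ a
      exact hR'.2.2 x y hxy a
  · refine ⟨fun x => ⟨(· = ·), eq_isLMPBisim μ, rfl⟩, ?_, ?_⟩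
    · intro x y h
      obtain ⟨R', hR', hxy⟩ := h
      exact ⟨fun u v => R' v u, inv_isLMPBisim hμ hR', hxy⟩
    · intro x y z h h'
      obtain ⟨R1, hR1, hxy⟩ := h
      obtain ⟨R2, hR2, hyz⟩ := h'
      exact ⟨fun u w => ∃ v, R1 u v ∧ R2 v w, comp_isLMPBisim hR1 hR2, _, hxy, hyz⟩
  · intro R' hR' x y hxy
    exact ⟨R', hR', hxy⟩
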